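/- Let n ≥ k ≥ 2 be positive integers with k ≡ 2 or 3 (mod 4) and with C(n,k) odd. Then the coefficient of t^{n(n−1)/2} in P_{n,k}(t) equals Σ_{M ∈ E_{n(n−1)/2} \ E°} (−1)^{|M|}. -/

import Mathlib

open Finset

/-- Row index type: `2`-element subsets of `[n]`. -/
abbrev RowIdx (n : ℕ) := {e : Finset (Fin n) // e ∈ Finset.powersetCard 2 (Finset.univ : Finset (Fin n))}

/-- Column index type: `k`-element subsets of `[n]`. -/
abbrev ColIdx (n k : ℕ) := {S : Finset (Fin n) // S ∈ Finset.powersetCard k (Finset.univ : Finset (Fin n))}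

/-- The incidence matrix `I(n,k)`, with `(e,S)`-entry `true` iff `e ⊆ S`.
`{0,1}`-matrices are encoded as `Bool`-valued matrices. -/
def Ink (n k : ℕ) : Matrix (RowIdx n) (ColIdx n k) Bool :=
  Matrix.of fun e S => decide (e.1 ⊆ S.1)

/-- `|M|`: the total number of ones (entries equal to `true`) of `M`. -/
def wt {n k : ℕ} (M : Matrix (RowIdx n) (ColIdx n k) Bool) : ℕ :=
  (Finset.univ.filter fun p : RowIdx n × ColIdx n k => M p.1 p.2 = true).card

/-- `Edges(M)`: the set of rows of `M` containing at least one `1`. -/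
def mEdges {n k : ℕ} (M : Matrix (RowIdx n) (ColIdx n k) Bool) : Finset (RowIdx n) :=
  haveI := fun e S => instDecidableEqBool (M e S) true
  Finset.univ.filter fun e => ∃ S, M e S = true

/-- The set `A'` of `{0,1}`-matrices `M ⪯ I(n,k)` each of whose columns has at least `1`
and at most `C(k,2) - 1` ones. -/
def matA (n k : ℕ) : Finset (Matrix (RowIdx n) (ColIdx n k) Bool) :=
  haveI := fun (M : Matrix (RowIdx n) (ColIdx n k) Bool) e S => instDecidableEqBool (M e S) true
  Finset.univ.filter fun M =>
    (∀ e S, M e S = true → Ink n k e S = true) ∧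
    ∀ S : ColIdx n k,
      1 ≤ (Finset.univ.filter fun e => M e S = true).card ∧
      (Finset.univ.filter fun e => M e S = true).card ≤ k.choose 2 - 1

/-- `E_m`: the set of `M ∈ A'` with `|Edges(M)| = m`. -/
def matE (n k m : ℕ) : Finset (Matrix (RowIdx n) (ColIdx n k) Bool) :=
  (matA n k).filter fun M => (mEdges M).card = m

/-- `E°`: the set of `M ∈ E_{C(n,2)}` each of whose rows has at least `1` and at most
`C(n-2,k-2) - 1` ones. -/
def matEcirc (n k : ℕ) : Finset (Matrix (RowIdx n) (ColIdx n k) Bool) :=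
  (matE n k (n.choose 2)).filter fun M =>
    ∀ e : RowIdx n,
      1 ≤ (Finset.univ.filter fun S => M e S = true).card ∧
      (Finset.univ.filter fun S => M e S = true).card ≤ (n - 2).choose (k - 2) - 1

/-- The polynomial `P_{n,k}(t) = Σ_{M ∈ A'} (−1)^{|M|} t^{|Edges(M)|}` (matrix formulation). -/
noncomputable def Pnk (n k : ℕ) : Polynomial ℤ :=
  ∑ M ∈ matA n k, Polynomial.C ((-1 : ℤ) ^ wt M) * Polynomial.X ^ (mEdges M).card

/- ------------------- auxiliary lemmas ------------------- -/

lemma filter_cmpl_card {α : Type*} [Fintype α] [DecidableEq α] (f g : α → Bool)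
    (h : ∀ a, g a = true → f a = true) :
    (Finset.univ.filter fun a => (f a && !(g a)) = true).card
      + (Finset.univ.filter fun a => g a = true).card
      = (Finset.univ.filter fun a => f a = true).card := by
  rw [← Finset.card_union_of_disjoint]
  · congr 1
    ext a
    simp only [Finset.mem_union, Finset.mem_filter, Finset.mem_univ, true_and,
      Bool.and_eq_true, Bool.not_eq_true']
    constructor
    · rintro (⟨hf, _⟩ | hg)
      · exact hf
      · exact h a hg
    · intro hf
      rcases Bool.eq_false_or_eq_true (g a) with hg | hg
      · exact Or.inr hg
      · exact Or.inl ⟨hf, hg⟩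
  · rw [Finset.disjoint_left]
    intro a ha hb
    simp only [Finset.mem_filter, Finset.mem_univ, true_and, Bool.and_eq_true,
      Bool.not_eq_true'] at ha hb
    rw [hb] at ha
    exact absurd ha.2 (by simp)

lemma col_Ink {n k : ℕ} (S : ColIdx n k) :
    (Finset.univ.filter fun e : RowIdx n => Ink n k e S = true).card = k.choose 2 := by
  have hS : S.1.card = k := (Finset.mem_powersetCard.mp S.2).2
  have hp := Finset.card_powersetCard 2 S.1
  rw [hS] at hp
  rw [← hp]
  apply Finset.card_bij' (fun e _ => e.1) (fun T hT =>
    ⟨T, Finset.mem_powersetCard.mpr ⟨Finset.subset_univ _, (Finset.mem_powersetCard.mp hT).2⟩⟩)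
  · intro e _; exact Subtype.ext rfl
  · intro T _; rfl
  · intro e he
    simp only [Finset.mem_filter, Ink, Matrix.of_apply, decide_eq_true_eq] at he
    exact Finset.mem_powersetCard.mpr ⟨he.2, (Finset.mem_powersetCard.mp e.2).2⟩
  · intro T hT
    simp only [Finset.mem_filter, Finset.mem_univ, true_and, Ink, Matrix.of_apply,
      decide_eq_true_eq]
    exact (Finset.mem_powersetCard.mp hT).1

lemma row_Ink {n k : ℕ} (hk : 2 ≤ k) (e : RowIdx n) :
    (Finset.univ.filter fun S : ColIdx n k => Ink n k e S = true).card
      = (n - 2).choose (k - 2) := by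
  have he : e.1.card = 2 := (Finset.mem_powersetCard.mp e.2).2
  have hcompl : ((Finset.univ : Finset (Fin n)) \ e.1).card = n - 2 := by
    rw [Finset.card_sdiff_of_subset (Finset.subset_univ _), Finset.card_univ, Fintype.card_fin, he]
  have hp := Finset.card_powersetCard (k-2) ((Finset.univ : Finset (Fin n)) \ e.1)
  rw [hcompl] at hp
  rw [← hp]
  apply Finset.card_bij' (fun S _ => S.1 \ e.1) (fun T hT =>
    ⟨T ∪ e.1, by
      obtain ⟨hTs, hTc⟩ := Finset.mem_powersetCard.mp hT
      obtain ⟨_, hd⟩ := Finset.subset_sdiff.mp hTs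
      refine Finset.mem_powersetCard.mpr ⟨Finset.subset_univ _, ?_⟩
      rw [Finset.card_union_of_disjoint hd, hTc, he]
      omega⟩)
  · intro S hS
    simp only [Finset.mem_filter, Finset.mem_univ, true_and, Ink, Matrix.of_apply,
      decide_eq_true_eq] at hS
    exact Subtype.ext (by simp [Finset.sdiff_union_of_subset hS])
  · intro T hT
    obtain ⟨hTs, _⟩ := Finset.mem_powersetCard.mp hT
    obtain ⟨_, hd⟩ := Finset.subset_sdiff.mp hTs
    simp [Finset.union_sdiff_distrib, Finset.sdiff_eq_self_of_disjoint hd]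
  · intro S hS
    simp only [Finset.mem_filter, Finset.mem_univ, true_and, Ink, Matrix.of_apply,
      decide_eq_true_eq] at hS
    refine Finset.mem_powersetCard.mpr ⟨?_, ?_⟩
    · exact Finset.sdiff_subset_sdiff (Finset.subset_univ _) le_rfl
    · rw [Finset.card_sdiff_of_subset hS, (Finset.mem_powersetCard.mp S.2).2, he]
  · intro T hT
    simp only [Finset.mem_filter, Finset.mem_univ, true_and, Ink, Matrix.of_apply,
      decide_eq_true_eq]
    exact Finset.subset_union_right

lemma wt_eq_sum_col {n k : ℕ} (M : Matrix (RowIdx n) (ColIdx n k) Bool) :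
    wt M = ∑ S : ColIdx n k, (Finset.univ.filter fun e => M e S = true).card := by
  rw [wt, Finset.card_filter, Fintype.sum_prod_type_right]
  exact Finset.sum_congr rfl fun S _ => (Finset.card_filter _ _).symm

lemma wt_Ink_odd {n k : ℕ} (hkmod : k % 4 = 2 ∨ k % 4 = 3) (hodd : Odd (n.choose k)) :
    Odd (wt (Ink n k)) := by
  have h1 : wt (Ink n k) = n.choose k * k.choose 2 := by
    rw [wt_eq_sum_col]
    simp only [col_Ink]
    rw [Finset.sum_const, smul_eq_mul, Finset.card_univ, Fintype.card_coe,
      Finset.card_powersetCard, Finset.card_univ, Fintype.card_fin]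
  rw [h1]
  refine hodd.mul ?_
  have h2 : k.choose 2 = k * (k-1) / 2 := Nat.choose_two_right k
  rcases hkmod with h | h
  · obtain ⟨q, hq⟩ : ∃ q, k = 4*q + 2 := ⟨k/4, by omega⟩
    have hk1 : k - 1 = 4*q + 1 := by omega
    have : k * (k-1) = 2 * ((2*q+1) * (4*q+1)) := by
      rw [hk1, hq]; ring
    rw [h2, this, Nat.mul_div_cancel_left _ (by norm_num)]
    exact ⟨4*q^2 + 3*q, by ring⟩
  · obtain ⟨q, hq⟩ : ∃ q, k = 4*q + 3 := ⟨k/4, by omega⟩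
    have hk1 : k - 1 = 4*q + 2 := by omega
    have : k * (k-1) = 2 * ((4*q+3) * (2*q+1)) := by
      rw [hk1, hq]; ring
    rw [h2, this, Nat.mul_div_cancel_left _ (by norm_num)]
    exact ⟨4*q^2 + 5*q + 1, by ring⟩

lemma neg_one_pow_add_eq_zero {a b : ℕ} (h : Odd (a + b)) :
    ((-1 : ℤ)) ^ a + (-1) ^ b = 0 := by
  have hab := Nat.odd_iff.mp h
  rcases Nat.even_or_odd a with ha | ha
  · have hb : Odd b := Nat.odd_iff.mpr (by have := Nat.even_iff.mp ha; omega)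
    rw [ha.neg_one_pow, hb.neg_one_pow]; ring
  · have hb : Even b := Nat.even_iff.mpr (by have := Nat.odd_iff.mp ha; omega)
    rw [ha.neg_one_pow, hb.neg_one_pow]; ring

/-- complementation inside `I(n,k)` -/
def cmplM {n k : ℕ} (M : Matrix (RowIdx n) (ColIdx n k) Bool) :
    Matrix (RowIdx n) (ColIdx n k) Bool :=
  Matrix.of fun e S => Ink n k e S && !(M e S)

lemma cmplM_apply {n k : ℕ} (M : Matrix (RowIdx n) (ColIdx n k) Bool)
    (e : RowIdx n) (S : ColIdx n k) :
    cmplM M e S = (Ink n k e S && !(M e S)) := rfl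

lemma cmplM_cmplM {n k : ℕ} {M : Matrix (RowIdx n) (ColIdx n k) Bool}
    (hle : ∀ e S, M e S = true → Ink n k e S = true) : cmplM (cmplM M) = M := by
  funext e S
  rcases Bool.eq_false_or_eq_true (M e S) with hM | hM
  · have hI := hle e S hM
    simp [cmplM_apply, hM, hI]
  · rcases Bool.eq_false_or_eq_true (Ink n k e S) with hI | hI <;>
      simp [cmplM_apply, hM, hI]

lemma wt_add_wt_cmplM {n k : ℕ} {M : Matrix (RowIdx n) (ColIdx n k) Bool}
    (hle : ∀ e S, M e S = true → Ink n k e S = true) :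
    wt (cmplM M) + wt M = wt (Ink n k) := by
  have := filter_cmpl_card (fun p : RowIdx n × ColIdx n k => Ink n k p.1 p.2)
    (fun p => M p.1 p.2) (fun p hp => hle p.1 p.2 hp)
  exact this

lemma mem_matEcirc_iff {n k : ℕ} {M : Matrix (RowIdx n) (ColIdx n k) Bool} :
    M ∈ matEcirc n k ↔
      (∀ e S, M e S = true → Ink n k e S = true) ∧
      (∀ S : ColIdx n k,
        1 ≤ (Finset.univ.filter fun e => M e S = true).card ∧
        (Finset.univ.filter fun e => M e S = true).card ≤ k.choose 2 - 1) ∧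
      (mEdges M).card = n.choose 2 ∧
      (∀ e : RowIdx n,
        1 ≤ (Finset.univ.filter fun S => M e S = true).card ∧
        (Finset.univ.filter fun S => M e S = true).card ≤ (n - 2).choose (k - 2) - 1) := by
  simp only [matEcirc, matE, matA, Finset.mem_filter, Finset.mem_univ, true_and]
  tauto

lemma cmplM_mem_matEcirc {n k : ℕ} (hk : 2 ≤ k) {M : Matrix (RowIdx n) (ColIdx n k) Bool}
    (hM : M ∈ matEcirc n k) : cmplM M ∈ matEcirc n k := by
  obtain ⟨hle, hcol, _, hrow⟩ := mem_matEcirc_iff.mp hM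
  have hle' : ∀ e S, cmplM M e S = true → Ink n k e S = true := by
    intro e S h
    rw [cmplM_apply, Bool.and_eq_true] at h
    exact h.1
  have hcol' : ∀ S : ColIdx n k,
      1 ≤ (Finset.univ.filter fun e => cmplM M e S = true).card ∧
      (Finset.univ.filter fun e => cmplM M e S = true).card ≤ k.choose 2 - 1 := by
    intro S
    have h : (Finset.univ.filter fun e => cmplM M e S = true).card
        + (Finset.univ.filter fun e => M e S = true).card
        = (Finset.univ.filter fun e : RowIdx n => Ink n k e S = true).card :=
      filter_cmpl_card (fun e : RowIdx n => Ink n k e S) (fun e => M e S)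
        (fun e he => hle e S he)
    rw [col_Ink] at h
    have hcolS := hcol S
    constructor <;> omega
  have hrow' : ∀ e : RowIdx n,
      1 ≤ (Finset.univ.filter fun S => cmplM M e S = true).card ∧
      (Finset.univ.filter fun S => cmplM M e S = true).card ≤ (n - 2).choose (k - 2) - 1 := by
    intro e
    have h : (Finset.univ.filter fun S => cmplM M e S = true).card
        + (Finset.univ.filter fun S => M e S = true).card
        = (Finset.univ.filter fun S : ColIdx n k => Ink n k e S = true).card :=
      filter_cmpl_card (fun S : ColIdx n k => Ink n k e S) (fun S => M e S)
        (fun S hS => hle e S hS)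
    rw [row_Ink hk] at h
    have hrowe := hrow e
    constructor <;> omega
  have hedge : (mEdges (cmplM M)).card = n.choose 2 := by
    have huniv : mEdges (cmplM M) = Finset.univ := by
      apply Finset.eq_univ_of_forall
      intro e
      simp only [mEdges, Finset.mem_filter, Finset.mem_univ, true_and]
      have h1 := (hrow' e).1
      obtain ⟨S, hS⟩ := Finset.card_pos.mp h1
      exact ⟨S, (Finset.mem_filter.mp hS).2⟩
    rw [huniv, Finset.card_univ, Fintype.card_coe, Finset.card_powersetCard,
      Finset.card_univ, Fintype.card_fin]
  exact mem_matEcirc_iff.mpr ⟨hle', hcol', hedge, hrow'⟩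

theorem stmt_14 (n k : ℕ) (hk : 2 ≤ k) (hkn : k ≤ n)
    (hkmod : k % 4 = 2 ∨ k % 4 = 3) (hodd : Odd (n.choose k)) :
    (Pnk n k).coeff (n * (n - 1) / 2) =
      ∑ M ∈ matE n k (n * (n - 1) / 2) \ matEcirc n k, (-1 : ℤ) ^ wt M := by
  have hm : n.choose 2 = n * (n - 1) / 2 := Nat.choose_two_right n
  have h1 : (Pnk n k).coeff (n * (n - 1) / 2)
      = ∑ M ∈ matE n k (n * (n - 1) / 2), (-1 : ℤ) ^ wt M := by
    rw [Pnk, Polynomial.finset_sum_coeff, matE, Finset.sum_filter]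
    apply Finset.sum_congr rfl
    intro M _
    rw [Polynomial.coeff_C_mul, Polynomial.coeff_X_pow]
    by_cases hc : (mEdges M).card = n * (n - 1) / 2
    · simp [hc]
    · simp [hc, Ne.symm hc]
  have hsub : matEcirc n k ⊆ matE n k (n * (n - 1) / 2) := by
    rw [← hm]
    exact fun M hM => (Finset.mem_filter.mp hM).1
  have h0 : ∑ M ∈ matEcirc n k, (-1 : ℤ) ^ wt M = 0 := by
    apply Finset.sum_involution (fun M _ => cmplM M)
    · intro M hM
      obtain ⟨hle, _, _, _⟩ := mem_matEcirc_iff.mp hM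
      have hsum : wt (cmplM M) + wt M = wt (Ink n k) := wt_add_wt_cmplM hle
      have hoddw : Odd (wt M + wt (cmplM M)) := by
        rw [Nat.add_comm, hsum]
        exact wt_Ink_odd hkmod hodd
      exact neg_one_pow_add_eq_zero hoddw
    · intro M hM _
      obtain ⟨hle, _, _, _⟩ := mem_matEcirc_iff.mp hM
      intro hEq
      have hsum : wt (cmplM M) + wt M = wt (Ink n k) := wt_add_wt_cmplM hle
      rw [hEq] at hsum
      have : Even (wt (Ink n k)) := ⟨wt M, by omega⟩
      exact (Nat.not_odd_iff_even.mpr this) (wt_Ink_odd hkmod hodd)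
    · intro M hM
      exact cmplM_mem_matEcirc hk hM
    · intro M hM
      obtain ⟨hle, _, _, _⟩ := mem_matEcirc_iff.mp hM
      exact cmplM_cmplM hle
  rw [h1, ← Finset.sum_sdiff hsub, h0, add_zero]
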